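/- For 0 < δ < 1 and z > 0, ₂F₁(1, 1-δ; 2-δ; -z) < (1+z)^{-1}·(1 + z/(2-δ)), where ₂F₁(1,1-δ;2-δ;-z) := (1-δ)·∫₀¹ t^{-δ}/(1+zt) dt. -/

import Mathlib

open MeasureTheory Set

theorem stmt8 (δ z : ℝ) (hδ : 0 < δ) (hδ1 : δ < 1) (hz : 0 < z) :
    (1 - δ) * (∫ t in Ioo (0 : ℝ) 1, t ^ (-δ) / (1 + z * t))
      < (1 + z)⁻¹ * (1 + z / (2 - δ)) := by
  have h1δ : (0:ℝ) < 1 - δ := by linarith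
  have h2δ : (0:ℝ) < 2 - δ := by linarith
  have hz1 : (0:ℝ) < 1 + z := by linarith
  -- integrability of rpow on Ioo 0 1
  have hint : ∀ r : ℝ, -1 < r → IntegrableOn (fun t : ℝ => t ^ r) (Ioo 0 1) := by
    intro r hr
    have h := (intervalIntegral.intervalIntegrable_rpow' (a := 0) (b := 1) hr).1
    exact h.mono_set Ioo_subset_Ioc_self
  -- values of those integrals
  have hval : ∀ r : ℝ, -1 < r → ∫ t in Ioo (0:ℝ) 1, t ^ r = (r + 1)⁻¹ := by
    intro r hr
    have h0 : ∫ t in Ioo (0:ℝ) 1, t ^ r = ∫ t in Ioc (0:ℝ) 1, t ^ r :=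
      (integral_Ioc_eq_integral_Ioo).symm
    rw [h0, ← intervalIntegral.integral_of_le (by norm_num : (0:ℝ) ≤ 1),
      integral_rpow (Or.inl hr)]
    rw [Real.one_rpow, Real.zero_rpow (by linarith : r + 1 ≠ 0)]
    rw [sub_zero, one_div]
  set g : ℝ → ℝ := fun t => t ^ (-δ) / (1 + z * t) with hg
  set h : ℝ → ℝ := fun t => (1 + z)⁻¹ * t ^ (-δ) + z / (1 + z) * (t ^ (-δ) - t ^ (1 - δ)) with hh
  have hrδ : (-1:ℝ) < -δ := by linarith
  have hr1δ : (-1:ℝ) < 1 - δ := by linarith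
  -- g measurable
  have hgmeas : AEStronglyMeasurable g (volume.restrict (Ioo (0:ℝ) 1)) := by
    apply Measurable.aestronglyMeasurable
    fun_prop
  -- g integrable on Ioo 0 1
  have hgint : IntegrableOn g (Ioo (0:ℝ) 1) := by
    apply Integrable.mono' (hint (-δ) hrδ) hgmeas
    rw [ae_restrict_iff' measurableSet_Ioo]
    filter_upwards with t ht
    rcases ht with ⟨ht0, ht1⟩
    have hA : 0 < t ^ (-δ) := Real.rpow_pos_of_pos ht0 _
    have hd : (1:ℝ) ≤ 1 + z * t := by nlinarith
    rw [Real.norm_eq_abs, abs_of_nonneg (by positivity)]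
    calc t ^ (-δ) / (1 + z * t) ≤ t ^ (-δ) / 1 := by
          apply div_le_div_of_nonneg_left hA.le one_pos hd
      _ = t ^ (-δ) := by ring
  -- h integrable on Ioo 0 1
  have hI1 : IntegrableOn (fun t : ℝ => (1 + z)⁻¹ * t ^ (-δ)) (Ioo 0 1) :=
    (hint (-δ) hrδ).const_mul _
  have hI2 : IntegrableOn (fun t : ℝ => z / (1 + z) * (t ^ (-δ) - t ^ (1 - δ))) (Ioo 0 1) :=
    (Integrable.sub (hint (-δ) hrδ) (hint (1-δ) hr1δ)).const_mul _
  have hhint : IntegrableOn h (Ioo (0:ℝ) 1) := hI1.add hI2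
  -- pointwise strict inequality g < h on Ioo 0 1
  have hlt : ∀ t ∈ Ioo (0:ℝ) 1, g t < h t := by
    intro t ht
    rcases ht with ⟨ht0, ht1⟩
    have hA : 0 < t ^ (-δ) := Real.rpow_pos_of_pos ht0 _
    have hd : (0:ℝ) < 1 + z * t := by nlinarith
    have hts : t ^ (1 - δ) = t ^ (-δ) * t := by
      rw [show (1 - δ) = -δ + 1 by ring, Real.rpow_add ht0, Real.rpow_one]
    simp only [hg, hh, hts]
    rw [div_lt_iff₀ hd]
    have key : (1 + z) < (1 + z * (1 - t)) * (1 + z * t) := by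
      nlinarith [mul_pos (mul_pos (mul_pos hz hz) ht0) (sub_pos.mpr ht1)]
    have expand : (1 + z)⁻¹ * t ^ (-δ) + z / (1 + z) * (t ^ (-δ) - t ^ (-δ) * t)
        = t ^ (-δ) * ((1 + z * (1 - t)) / (1 + z)) := by
      field_simp
    rw [expand]
    rw [show t ^ (-δ) * ((1 + z * (1 - t)) / (1 + z)) * (1 + z * t)
        = t ^ (-δ) * ((1 + z * (1 - t)) * (1 + z * t)) / (1 + z) from by ring,
      lt_div_iff₀ hz1]
    exact (mul_lt_mul_iff_right₀ hA).mpr key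
  -- strict inequality of integrals via positivity of integral of (h - g)
  have hdiffpos : 0 < ∫ t in Ioo (0:ℝ) 1, (h t - g t) := by
    rw [setIntegral_pos_iff_support_of_nonneg_ae]
    · have hsub : Ioo (0:ℝ) 1 ⊆ Function.support (fun t => h t - g t) ∩ Ioo 0 1 := by
        intro t ht
        refine ⟨?_, ht⟩
        simp only [Function.mem_support]
        exact ne_of_gt (sub_pos.mpr (hlt t ht))
      calc (0:ENNReal) < 1 := by norm_num
        _ = volume (Ioo (0:ℝ) 1) := by simp
        _ ≤ volume (Function.support (fun t => h t - g t) ∩ Ioo 0 1) := measure_mono hsub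
    · filter_upwards [ae_restrict_mem measurableSet_Ioo] with t ht
      exact (sub_pos.mpr (hlt t ht)).le
    · exact hhint.sub hgint
  have hIlt : (∫ t in Ioo (0:ℝ) 1, g t) < ∫ t in Ioo (0:ℝ) 1, h t := by
    have heq : (∫ t in Ioo (0:ℝ) 1, (h t - g t))
        = (∫ t in Ioo (0:ℝ) 1, h t) - ∫ t in Ioo (0:ℝ) 1, g t := integral_sub hhint hgint
    linarith
  -- compute ∫ h
  have hIh : (∫ t in Ioo (0:ℝ) 1, h t)
      = (1 + z)⁻¹ * (1 - δ)⁻¹ + z / (1 + z) * ((1 - δ)⁻¹ - (2 - δ)⁻¹) := by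
    simp only [hh]
    rw [integral_add hI1 hI2]
    rw [integral_const_mul, integral_const_mul,
      integral_sub (hint (-δ) hrδ) (hint (1-δ) hr1δ)]
    rw [hval (-δ) hrδ, hval (1-δ) hr1δ,
      show -δ + 1 = 1 - δ from by ring, show 1 - δ + 1 = 2 - δ from by ring]
  have hfin : (1 - δ) * ((1 + z)⁻¹ * (1 - δ)⁻¹ + z / (1 + z) * ((1 - δ)⁻¹ - (2 - δ)⁻¹))
      = (1 + z)⁻¹ * (1 + z / (2 - δ)) := by
    field_simp
    ring
  calc (1 - δ) * (∫ t in Ioo (0:ℝ) 1, g t)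
      < (1 - δ) * (∫ t in Ioo (0:ℝ) 1, h t) := by
        exact (mul_lt_mul_iff_right₀ h1δ).mpr hIlt
    _ = (1 + z)⁻¹ * (1 + z / (2 - δ)) := by rw [hIh, hfin]
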